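/- arXiv:1203.4806 — 2 statements merged into one kernel-verified Lean document; each statement's English description precedes it below -/
import Mathlib

section
/- Let E be a reflexive Banach space continuously embedded in a Banach space E₀, and let H⁺ be a trajectory space, i.e. an arbitrary subset of C([0,∞);E₀) ∩ L∞(0,∞;E). Suppose there exists an absorbing set P for H⁺ which is relatively compact in C([0,∞);E₀) (with the topology of uniform convergence on compact subintervals) and bounded in L∞(0,∞;E). Then there exists a minimal trajectory attractor U for the trajectory space H⁺. -/
open scoped NNReal
open Filter Topology

set_option maxHeartbeats 1000000
set_option linter.unusedSectionVars false
set_option linter.unusedVariables false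

open Filter Topology NormedSpace

noncomputable section

variable {E E₀ : Type*} [NormedAddCommGroup E] [NormedSpace ℝ E]
  [NormedAddCommGroup E₀] [NormedSpace ℝ E₀]

/-- The translation (shift) operator `T(h)u(t) = u(t+h)` on `C([0,∞); E₀)`. -/
def shiftOp (h : ℝ≥0) (u : C(ℝ≥0, E₀)) : C(ℝ≥0, E₀) :=
  u.comp ⟨fun t => t + h, by continuity⟩

/-- `u` takes values in `E` (via the embedding `j`) with `E`-norm bounded by `R`. -/
def BddInE (j : E →L[ℝ] E₀) (R : ℝ) (u : C(ℝ≥0, E₀)) : Prop :=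
  ∀ t : ℝ≥0, ∃ x : E, j x = u t ∧ ‖x‖ ≤ R

/-- `u ∈ L∞(0,∞;E)`: `u` takes values in `E` with bounded `E`-norm. -/
def MemLinftyE (j : E →L[ℝ] E₀) (u : C(ℝ≥0, E₀)) : Prop :=
  ∃ R : ℝ, BddInE j R u

/-- A family of trajectories is bounded in `L∞(0,∞;E)`. -/
def BddFamilyE (j : E →L[ℝ] E₀) (B : Set C(ℝ≥0, E₀)) : Prop :=
  ∃ R : ℝ, ∀ u ∈ B, BddInE j R u

/-- `P` is attracting for the trajectory space `Hplus`: for every `B ⊆ Hplus` bounded in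
`L∞(0,∞;E)`, the shifts of `B` approach `P` uniformly, in the uniformity of uniform
convergence on compact subintervals on `C([0,∞); E₀)`
(i.e. `sup_{u∈B} inf_{v∈P} dist(T(h)u, v) → 0` as `h → ∞`). -/
def IsAttracting (j : E →L[ℝ] E₀) (Hplus P : Set C(ℝ≥0, E₀)) : Prop :=
  ∀ B ⊆ Hplus, BddFamilyE j B →
    ∀ V ∈ uniformity C(ℝ≥0, E₀), ∃ h₀ : ℝ≥0, ∀ h : ℝ≥0, h₀ ≤ h →
      ∀ u ∈ B, ∃ v ∈ P, (shiftOp h u, v) ∈ V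

/-- `P` is absorbing for the trajectory space `Hplus`: every `B ⊆ Hplus` bounded in
`L∞(0,∞;E)` satisfies `T(t)B ⊆ P` for all sufficiently large `t`. -/
def IsAbsorbing (j : E →L[ℝ] E₀) (Hplus P : Set C(ℝ≥0, E₀)) : Prop :=
  ∀ B ⊆ Hplus, BddFamilyE j B → ∃ h : ℝ≥0, ∀ t : ℝ≥0, h ≤ t → shiftOp t '' B ⊆ P

/-- `U` is the minimal trajectory attractor for the trajectory space `Hplus`:
it is compact in `C([0,∞); E₀)`, bounded in `L∞(0,∞;E)`, strictly shift-invariant,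
attracting, and contained in every other set with these properties. -/
def IsMinTrajAttractor (j : E →L[ℝ] E₀) (Hplus U : Set C(ℝ≥0, E₀)) : Prop :=
  (IsCompact U ∧ BddFamilyE j U) ∧
    (∀ t : ℝ≥0, shiftOp t '' U = U) ∧
    IsAttracting j Hplus U ∧
    ∀ U' : Set C(ℝ≥0, E₀),
      (IsCompact U' ∧ BddFamilyE j U') → (∀ t : ℝ≥0, shiftOp t '' U' = U') →
        IsAttracting j Hplus U' → U ⊆ U'

/-! ### Auxiliary material -/

lemma isClosed_jball (j : E →L[ℝ] E₀)
    (hrefl : Function.Surjective (NormedSpace.inclusionInDoubleDual ℝ E)) (R : ℝ) :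
    IsClosed (j '' Metric.closedBall (0 : E) R) := by
  apply isClosed_of_closure_subset
  intro y hy
  set G : Filter E := Filter.comap j (𝓝 y) ⊓ 𝓟 (Metric.closedBall 0 R) with hGdef
  have hGne : G.NeBot := by
    rw [hGdef, Filter.inf_principal_neBot_iff]
    intro U hU
    obtain ⟨N, hN, hNU⟩ := Filter.mem_comap.mp hU
    obtain ⟨z, hz1, hz2⟩ := mem_closure_iff_nhds.mp hy N hN
    obtain ⟨x, hx, rfl⟩ := hz2
    exact ⟨x, hNU hz1, hx⟩
  set ι := NormedSpace.inclusionInDoubleDual ℝ E with hι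
  set g : E → WeakDual ℝ (StrongDual ℝ E) := fun x => StrongDual.toWeakDual (ι x) with hg
  set S : Set (WeakDual ℝ (StrongDual ℝ E)) :=
    WeakDual.toStrongDual ⁻¹' Metric.closedBall (0 : StrongDual ℝ (StrongDual ℝ E)) R with hS
  have hScomp : IsCompact S := WeakDual.isCompact_closedBall (0 : StrongDual ℝ (StrongDual ℝ E)) R
  have hnorm : ∀ x : E, ‖ι x‖ = ‖x‖ := fun x =>
    (NormedSpace.inclusionInDoubleDualLi ℝ (E := E)).norm_map x
  have hle : Filter.map g G ≤ Filter.principal S := by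
    rw [Filter.le_principal_iff, Filter.mem_map]
    refine Filter.mem_of_superset (Filter.mem_inf_of_right (Filter.mem_principal_self _))
      (fun x hx => ?_)
    simp only [Set.mem_preimage, hS, Set.mem_preimage, mem_closedBall_zero_iff]
    exact (mem_closedBall_zero_iff (a := ι x)).mpr (by rw [hnorm]; exact mem_closedBall_zero_iff.mp hx)
  haveI : (Filter.map g G).NeBot := Filter.map_neBot
  obtain ⟨φ, hφS, hφ⟩ := hScomp hle
  obtain ⟨x₀, hx₀⟩ := hrefl (WeakDual.toStrongDual φ)
  have hx₀R : ‖x₀‖ ≤ R := by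
    rw [← hnorm x₀, hι, hx₀]
    have h := hφS; rw [hS, Set.mem_preimage] at h; exact (mem_closedBall_zero_iff (a := WeakDual.toStrongDual φ)).mp h
  refine ⟨x₀, mem_closedBall_zero_iff.mpr hx₀R, ?_⟩
  rw [NormedSpace.eq_iff_forall_dual_eq ℝ]
  intro f
  have heval : Continuous fun ψ : WeakDual ℝ (StrongDual ℝ E) => ψ (f.comp j) :=
    WeakDual.eval_continuous _
  have htend : Filter.Tendsto (fun x => f (j x)) G (𝓝 (f y)) := by
    have h1 : Filter.Tendsto j G (𝓝 y) := by
      refine Filter.Tendsto.mono_left ?_ (inf_le_left (b := 𝓟 (Metric.closedBall 0 R)))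
      exact fun s hs => Filter.preimage_mem_comap hs
    exact (f.continuous.tendsto y).comp h1
  have hcl : ClusterPt (φ (f.comp j)) (Filter.map (fun x => f (j x)) G) := by
    have hmap : Filter.map (fun ψ : WeakDual ℝ (StrongDual ℝ E) => ψ (f.comp j)) (Filter.map g G)
        = Filter.map (fun x => f (j x)) G := by
      rw [Filter.map_map]; rfl
    have h3 := hφ.map heval.continuousAt (Filter.tendsto_map)
    rwa [hmap] at h3
  have heq : φ (f.comp j) = f y := by
    haveI : (Filter.map (fun x => f (j x)) G).NeBot := Filter.map_neBot
    have h4 : ClusterPt (φ (f.comp j)) (𝓝 (f y)) := hcl.mono htend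
    exact t2_iff_nhds.mp inferInstance h4
  calc f (j x₀) = (ι x₀) (f.comp j) := rfl
    _ = (WeakDual.toStrongDual φ) (f.comp j) := by rw [hx₀]
    _ = f y := heq

lemma continuous_shiftOp (t : ℝ≥0) : Continuous (shiftOp (E₀ := E₀) t) :=
  ContinuousMap.continuous_precomp _

lemma shiftOp_shiftOp (t s : ℝ≥0) (u : C(ℝ≥0, E₀)) :
    shiftOp t (shiftOp s u) = shiftOp (s + t) u := by
  ext x
  show u ((x + t) + s) = u (x + (s + t))
  congr 1
  ring

/-- The tail `{T(s)u : u ∈ B, s ≥ h}` of the translates of `B`. -/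
def gam (B : Set C(ℝ≥0, E₀)) (h : ℝ≥0) : Set C(ℝ≥0, E₀) :=
  ⋃ t ∈ {t : ℝ≥0 | h ≤ t}, shiftOp t '' B

lemma mem_gam {B : Set C(ℝ≥0, E₀)} {h : ℝ≥0} {v : C(ℝ≥0, E₀)} :
    v ∈ gam B h ↔ ∃ t, h ≤ t ∧ ∃ u ∈ B, shiftOp t u = v := by
  simp [gam, Set.mem_iUnion]

lemma gam_antitone {B : Set C(ℝ≥0, E₀)} {h h' : ℝ≥0} (hh : h ≤ h') :
    gam B h' ⊆ gam B h := by
  intro v hv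
  obtain ⟨t, ht, u, hu, rfl⟩ := mem_gam.mp hv
  exact mem_gam.mpr ⟨t, le_trans hh ht, u, hu, rfl⟩

lemma gam_shift (B : Set C(ℝ≥0, E₀)) (t h : ℝ≥0) :
    gam B (t + h) = shiftOp t '' gam B h := by
  ext v
  constructor
  · intro hv
    obtain ⟨s, hs, u, hu, rfl⟩ := mem_gam.mp hv
    have hts : t ≤ s := le_trans (le_add_right le_rfl) hs
    refine ⟨shiftOp (s - t) u, mem_gam.mpr ⟨s - t, ?_, u, hu, rfl⟩, ?_⟩
    · exact le_tsub_of_add_le_left hs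
    · rw [shiftOp_shiftOp, tsub_add_cancel_of_le hts]
  · rintro ⟨w, hw, rfl⟩
    obtain ⟨s, hs, u, hu, rfl⟩ := mem_gam.mp hw
    rw [shiftOp_shiftOp]
    refine mem_gam.mpr ⟨s + t, ?_, u, hu, rfl⟩
    rw [add_comm t h]
    exact add_le_add_left hs t

/-- The ω-limit set of `B` under translations. -/
def omegaSet (B : Set C(ℝ≥0, E₀)) : Set C(ℝ≥0, E₀) :=
  ⋂ h : ℝ≥0, closure (gam B h)

lemma gam_subset_P {B P : Set C(ℝ≥0, E₀)} {hB : ℝ≥0}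
    (habs : ∀ s, hB ≤ s → shiftOp s '' B ⊆ P) {h : ℝ≥0} (hh : hB ≤ h) :
    gam B h ⊆ P := by
  intro v hv
  obtain ⟨t, ht, u, hu, rfl⟩ := mem_gam.mp hv
  exact habs t (le_trans hh ht) ⟨u, hu, rfl⟩

lemma omega_subset_closureP {B P : Set C(ℝ≥0, E₀)} {hB : ℝ≥0}
    (habs : ∀ s, hB ≤ s → shiftOp s '' B ⊆ P) :
    omegaSet B ⊆ closure P :=
  le_trans (Set.iInter_subset _ hB) (closure_mono (gam_subset_P habs le_rfl))

lemma mem_omega_iff {B : Set C(ℝ≥0, E₀)} {v : C(ℝ≥0, E₀)} :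
    v ∈ omegaSet B ↔ ∀ h : ℝ≥0, v ∈ closure (gam B h) := Set.mem_iInter

/-- The ω-limit set is strictly invariant under translations. -/
lemma omega_shift_eq {B P : Set C(ℝ≥0, E₀)} (hPcomp : IsCompact (closure P)) {hB : ℝ≥0}
    (habs : ∀ s, hB ≤ s → shiftOp s '' B ⊆ P) (t : ℝ≥0) :
    shiftOp t '' omegaSet B = omegaSet B := by
  have hclcomp : ∀ h : ℝ≥0, hB ≤ h → IsCompact (closure (gam B h)) := fun h hh =>
    hPcomp.of_isClosed_subset isClosed_closure (closure_mono (gam_subset_P habs hh))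
  apply Set.Subset.antisymm
  · rintro v ⟨w, hw, rfl⟩
    rw [mem_omega_iff] at hw ⊢
    intro h
    have h1 : shiftOp t w ∈ closure (shiftOp t '' gam B h) :=
      image_closure_subset_closure_image (continuous_shiftOp t) ⟨w, hw h, rfl⟩
    rw [← gam_shift] at h1
    exact closure_mono (gam_antitone le_add_self) h1
  · intro v hv
    have hCcl : ∀ h : ℝ≥0, IsClosed (closure (gam B (hB + h)) ∩ (shiftOp t ⁻¹' {v})) :=
      fun h => isClosed_closure.inter (isClosed_singleton.preimage (continuous_shiftOp t))
    have hCanti : ∀ {a b : ℝ≥0}, a ≤ b →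
        closure (gam B (hB + b)) ∩ (shiftOp t ⁻¹' {v})
          ⊆ closure (gam B (hB + a)) ∩ (shiftOp t ⁻¹' {v}) := fun {a b} hab =>
      Set.inter_subset_inter_left _ (closure_mono (gam_antitone (add_le_add_right hab hB)))
    have hCcomp : ∀ h : ℝ≥0, IsCompact (closure (gam B (hB + h)) ∩ (shiftOp t ⁻¹' {v})) :=
      fun h => (hclcomp _ le_self_add).of_isClosed_subset (hCcl h) Set.inter_subset_left
    have hCne : ∀ h : ℝ≥0, (closure (gam B (hB + h)) ∩ (shiftOp t ⁻¹' {v})).Nonempty := by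
      intro h
      have h1 : v ∈ closure (gam B (t + (hB + h))) := mem_omega_iff.mp hv _
      rw [gam_shift] at h1
      have h2 : closure (shiftOp t '' gam B (hB + h))
          ⊆ shiftOp t '' closure (gam B (hB + h)) := by
        apply closure_minimal (Set.image_mono subset_closure)
        exact ((hclcomp _ le_self_add).image (continuous_shiftOp t)).isClosed
      obtain ⟨w, hw, hwv⟩ := h2 h1
      exact ⟨w, hw, hwv⟩
    have hCdir : Directed (· ⊇ ·)
        (fun h : ℝ≥0 => closure (gam B (hB + h)) ∩ (shiftOp t ⁻¹' {v})) := fun a b =>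
      ⟨a ⊔ b, hCanti le_sup_left, hCanti le_sup_right⟩
    obtain ⟨w, hw⟩ := IsCompact.nonempty_iInter_of_directed_nonempty_isCompact_isClosed
      (fun h : ℝ≥0 => closure (gam B (hB + h)) ∩ (shiftOp t ⁻¹' {v}))
      hCdir hCne hCcomp hCcl
    simp only [Set.mem_iInter, Set.mem_inter_iff, Set.mem_preimage,
      Set.mem_singleton_iff] at hw
    refine ⟨w, mem_omega_iff.mpr (fun h => ?_), (hw 0).2⟩
    exact closure_mono (gam_antitone le_add_self) (hw h).1

/-- Translates of `B` eventually enter any uniform neighborhood of `omegaSet B`. -/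
lemma attract_omega {B P : Set C(ℝ≥0, E₀)} (hPcomp : IsCompact (closure P)) {hB : ℝ≥0}
    (habs : ∀ s, hB ≤ s → shiftOp s '' B ⊆ P) {V : Set (C(ℝ≥0, E₀) × C(ℝ≥0, E₀))}
    (hV : V ∈ uniformity C(ℝ≥0, E₀)) :
    ∃ h₀ : ℝ≥0, ∀ h : ℝ≥0, h₀ ≤ h → ∀ u ∈ B, ∃ v ∈ omegaSet B, (shiftOp h u, v) ∈ V := by
  obtain ⟨V', ⟨hV'mem, hV'open⟩, hV'sub⟩ := (uniformity_hasBasis_open).mem_iff.mp hV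
  have hOopen : IsOpen (⋃ v ∈ omegaSet B, (fun w => (w, v)) ⁻¹' V') :=
    isOpen_biUnion fun v _ => hV'open.preimage (continuous_id.prodMk continuous_const)
  have homegaO : omegaSet B ⊆ ⋃ v ∈ omegaSet B, (fun w => (w, v)) ⁻¹' V' := fun v hv =>
    Set.mem_biUnion hv (refl_mem_uniformity hV'mem)
  have hK'comp : IsCompact (closure (gam B hB)
      ∩ (⋃ v ∈ omegaSet B, (fun w => (w, v)) ⁻¹' V')ᶜ) :=
    (hPcomp.of_isClosed_subset isClosed_closure (closure_mono (gam_subset_P habs le_rfl))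
      ).of_isClosed_subset (isClosed_closure.inter hOopen.isClosed_compl)
      Set.inter_subset_left
  have hempty : (closure (gam B hB) ∩ (⋃ v ∈ omegaSet B, (fun w => (w, v)) ⁻¹' V')ᶜ)
      ∩ ⋂ h : ℝ≥0, closure (gam B (hB + h)) = ∅ := by
    rw [Set.eq_empty_iff_forall_notMem]
    rintro w ⟨⟨-, hwO⟩, hwZ⟩
    apply hwO
    apply homegaO
    rw [mem_omega_iff]
    intro h
    exact closure_mono (gam_antitone le_add_self) (Set.mem_iInter.mp hwZ h)
  obtain ⟨F, hF⟩ := hK'comp.elim_finite_subfamily_closed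
    (fun h : ℝ≥0 => closure (gam B (hB + h))) (fun h => isClosed_closure) hempty
  refine ⟨hB + F.sup id, fun h hh u hu => ?_⟩
  have hmem : shiftOp h u ∈ gam B (hB + F.sup id) := mem_gam.mpr ⟨h, hh, u, hu, rfl⟩
  have hinO : shiftOp h u ∈ ⋃ v ∈ omegaSet B, (fun w => (w, v)) ⁻¹' V' := by
    by_contra hno
    have h1 : shiftOp h u ∈ closure (gam B hB)
        ∩ (⋃ v ∈ omegaSet B, (fun w => (w, v)) ⁻¹' V')ᶜ :=
      ⟨subset_closure (gam_antitone le_self_add hmem), hno⟩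
    have h2 : shiftOp h u ∈ ⋂ i ∈ F, closure (gam B (hB + i)) := by
      refine Set.mem_iInter₂.mpr fun i hi => subset_closure (gam_antitone ?_ hmem)
      exact add_le_add_right (Finset.le_sup (f := id) hi) hB
    rw [Set.eq_empty_iff_forall_notMem] at hF
    exact hF _ ⟨h1, h2⟩
  obtain ⟨v, hv, hvV⟩ := by
    simpa only [Set.mem_iUnion, Set.mem_preimage, exists_prop] using hinO
  exact ⟨v, hv, hV'sub hvV⟩

/-- If the trajectory space `Hplus ⊆ C([0,∞);E₀) ∩ L∞(0,∞;E)` (with `E` a reflexive Banach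
space continuously embedded in the Banach space `E₀` via `j`) admits an absorbing set `P`
which is relatively compact in `C([0,∞); E₀)` and bounded in `L∞(0,∞;E)`, then `Hplus`
possesses a minimal trajectory attractor. -/
theorem exists_minimal_trajectory_attractor
    [CompleteSpace E] [CompleteSpace E₀]
    (j : E →L[ℝ] E₀) (hj : Function.Injective j)
    (hrefl : Function.Surjective (NormedSpace.inclusionInDoubleDual ℝ E))
    (Hplus : Set C(ℝ≥0, E₀)) (hH : ∀ u ∈ Hplus, MemLinftyE j u)
    (P : Set C(ℝ≥0, E₀)) (hP : ∀ u ∈ P, MemLinftyE j u)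
    (hPabs : IsAbsorbing j Hplus P)
    (hPcomp : IsCompact (closure P))
    (hPbdd : BddFamilyE j P) :
    ∃ U : Set C(ℝ≥0, E₀), IsMinTrajAttractor j Hplus U := by
  classical
  set 𝔅 : Set (Set C(ℝ≥0, E₀)) := {B | B ⊆ Hplus ∧ BddFamilyE j B} with h𝔅
  set W : Set C(ℝ≥0, E₀) := ⋃ B ∈ 𝔅, omegaSet B with hW
  set U : Set C(ℝ≥0, E₀) := closure W with hU
  -- absorbing data for each B ∈ 𝔅
  have habs : ∀ B ∈ 𝔅, ∃ hB : ℝ≥0, ∀ s, hB ≤ s → shiftOp s '' B ⊆ P := fun B hB =>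
    hPabs B hB.1 hB.2
  -- W is contained in the compact set `closure P`
  have hWsub : W ⊆ closure P := by
    rw [hW]
    refine Set.iUnion₂_subset fun B hB => ?_
    obtain ⟨hb, habsB⟩ := habs B hB
    exact omega_subset_closureP habsB
  have hUsub : U ⊆ closure P := closure_minimal hWsub isClosed_closure
  have hUcomp : IsCompact U := hPcomp.of_isClosed_subset isClosed_closure hUsub
  -- W is strictly invariant
  have hWinv : ∀ t : ℝ≥0, shiftOp t '' W = W := by
    intro t
    rw [hW, Set.image_iUnion₂]
    refine Set.iUnion₂_congr fun B hB => ?_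
    obtain ⟨hb, habsB⟩ := habs B hB
    exact omega_shift_eq hPcomp habsB t
  -- U is strictly invariant
  have hUinv : ∀ t : ℝ≥0, shiftOp t '' U = U := by
    intro t
    apply Set.Subset.antisymm
    · calc shiftOp t '' U ⊆ closure (shiftOp t '' W) :=
            image_closure_subset_closure_image (continuous_shiftOp t)
        _ = U := by rw [hWinv t]
    · apply closure_minimal
      · rw [← hWinv t]
        exact Set.image_mono subset_closure
      · exact (hUcomp.image (continuous_shiftOp t)).isClosed
  -- U is bounded in L∞(0,∞;E)
  have hUbdd : BddFamilyE j U := by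
    obtain ⟨R, hR⟩ := hPbdd
    refine ⟨R, fun u hu t => ?_⟩
    have hclosedS : IsClosed {w : C(ℝ≥0, E₀) | w t ∈ j '' Metric.closedBall 0 R} :=
      (isClosed_jball j hrefl R).preimage (continuous_eval_const t)
    have hPt : P ⊆ {w : C(ℝ≥0, E₀) | w t ∈ j '' Metric.closedBall 0 R} := by
      intro w hw
      obtain ⟨x, hx1, hx2⟩ := hR w hw t
      exact ⟨x, mem_closedBall_zero_iff.mpr hx2, hx1⟩
    have := (closure_minimal hPt hclosedS) (hUsub hu)
    obtain ⟨x, hx1, hx2⟩ := this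
    exact ⟨x, hx2, mem_closedBall_zero_iff.mp hx1⟩
  -- U is attracting
  have hUattr : IsAttracting j Hplus U := by
    intro B hBsub hBbdd V hV
    obtain ⟨hb, habsB⟩ := habs B ⟨hBsub, hBbdd⟩
    obtain ⟨h₀, hh₀⟩ := attract_omega hPcomp habsB hV
    refine ⟨h₀, fun h hh u hu => ?_⟩
    obtain ⟨v, hv, hvV⟩ := hh₀ h hh u hu
    refine ⟨v, subset_closure (Set.mem_biUnion (⟨hBsub, hBbdd⟩ : B ∈ 𝔅) hv), hvV⟩
  refine ⟨U, ⟨hUcomp, hUbdd⟩, hUinv, hUattr, ?_⟩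
  -- minimality
  rintro U' ⟨hU'comp, -⟩ - hU'attr
  have hU'closed : IsClosed U' := hU'comp.isClosed
  apply closure_minimal ?_ hU'closed
  refine Set.iUnion₂_subset fun B hB v hv => ?_
  have hvU' : v ∈ closure U' := by
    rw [UniformSpace.mem_closure_iff_ball]
    intro V hV
    obtain ⟨V₂, hV₂, hV₂sub⟩ := comp_mem_uniformity_sets hV
    obtain ⟨h₀, hh₀⟩ := hU'attr B hB.1 hB.2 V₂ hV₂
    have h1 : v ∈ closure (gam B h₀) := mem_omega_iff.mp hv h₀
    obtain ⟨z, hz1, hz2⟩ := UniformSpace.mem_closure_iff_ball.mp h1 hV₂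
    obtain ⟨s, hs, u, hu, rfl⟩ := mem_gam.mp hz2
    obtain ⟨w, hwU', hwV⟩ := hh₀ s hs u hu
    exact ⟨w, hV₂sub ⟨shiftOp s u, hz1, hwV⟩, hwU'⟩
  rwa [hU'closed.closure_eq] at hvU'
end
end

section
/- Let E be a reflexive Banach space continuously embedded in a Banach space E₀, and let H⁺ be a trajectory space, i.e. an arbitrary subset of C([0,∞);E₀) ∩ L∞(0,∞;E). If there exists a minimal trajectory attractor U for the trajectory space H⁺, then there exists a global attractor A (in E₀) for H⁺, and for every t ≥ 0 one has A = {ξ(t) : ξ ∈ U}. -/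
open scoped NNReal
open Filter Topology

noncomputable section

variable {E E₀ : Type*} [NormedAddCommGroup E] [NormedSpace ℝ E]
  [NormedAddCommGroup E₀] [NormedSpace ℝ E₀]

/-- `A ⊆ E` is the global attractor (in `E₀`) for the trajectory space `Hplus`:
`A` is compact in `E₀` and bounded in `E`; for every `B ⊆ Hplus` bounded in `L∞(0,∞;E)`
one has `sup_{u∈B} inf_{v∈A} ‖u(t) − v‖_{E₀} → 0` as `t → ∞`; and `A` is the minimal set
with these two properties. -/
def IsGlobalAttractor (j : E →L[ℝ] E₀) (Hplus : Set C(ℝ≥0, E₀)) (A : Set E) : Prop :=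
  (IsCompact (j '' A) ∧ Bornology.IsBounded A) ∧
    (∀ B ⊆ Hplus, BddFamilyE j B → ∀ ε : ℝ, 0 < ε → ∃ t₀ : ℝ≥0, ∀ t : ℝ≥0, t₀ ≤ t →
      ∀ u ∈ B, ∃ v ∈ A, ‖u t - j v‖ < ε) ∧
    ∀ A' : Set E,
      (IsCompact (j '' A') ∧ Bornology.IsBounded A') →
        (∀ B ⊆ Hplus, BddFamilyE j B → ∀ ε : ℝ, 0 < ε → ∃ t₀ : ℝ≥0, ∀ t : ℝ≥0, t₀ ≤ t →
          ∀ u ∈ B, ∃ v ∈ A', ‖u t - j v‖ < ε) →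
        A ⊆ A'

set_option linter.unusedSectionVars false

open Set in
lemma shiftOp_apply (h : ℝ≥0) (u : C(ℝ≥0, E₀)) (t : ℝ≥0) : shiftOp h u t = u (t + h) := rfl

lemma shiftOp_comp (a b : ℝ≥0) (u : C(ℝ≥0, E₀)) :
    shiftOp a (shiftOp b u) = shiftOp (b + a) u := by
  ext x
  simp only [shiftOp_apply]
  congr 1
  ring

lemma shiftOp_zero (u : C(ℝ≥0, E₀)) : shiftOp 0 u = u := by
  ext x; simp [shiftOp_apply]

lemma continuous_shiftOp_s1 (h : ℝ≥0) : Continuous (shiftOp h : C(ℝ≥0, E₀) → C(ℝ≥0, E₀)) :=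
  ContinuousMap.continuous_precomp _

lemma entourage_mem {K : Set ℝ≥0} (hK : IsCompact K) {V : Set (E₀ × E₀)}
    (hV : V ∈ uniformity E₀) :
    {fg : C(ℝ≥0, E₀) × C(ℝ≥0, E₀) | ∀ x ∈ K, (fg.1 x, fg.2 x) ∈ V} ∈
      uniformity C(ℝ≥0, E₀) :=
  ContinuousMap.hasBasis_compactConvergenceUniformity.mem_iff.mpr
    ⟨(K, V), ⟨hK, hV⟩, subset_rfl⟩

lemma isCompact_Iic_nnreal (a : ℝ≥0) : IsCompact (Set.Iic a) := by
  have : Set.Iic a = Set.Icc 0 a := by ext x; simp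
  rw [this]; exact isCompact_Icc

/-- Key lemma: every trajectory of the minimal trajectory attractor takes all of
its values in the image of any compact attracting set `A'`. -/
lemma values_mem_of_attracting (j : E →L[ℝ] E₀) (Hplus U : Set C(ℝ≥0, E₀))
    (hU : IsMinTrajAttractor j Hplus U) (A' : Set E) (hA'c : IsCompact (j '' A'))
    (hattr : ∀ B ⊆ Hplus, BddFamilyE j B → ∀ ε : ℝ, 0 < ε → ∃ t₀ : ℝ≥0, ∀ t : ℝ≥0, t₀ ≤ t →
          ∀ u ∈ B, ∃ v ∈ A', ‖u t - j v‖ < ε) :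
    ∀ ξ ∈ U, ∀ t : ℝ≥0, ξ t ∈ j '' A' := by
  obtain ⟨⟨hUc, hUb⟩, hUinv, hUattr, hUmin⟩ := hU
  have hUcl : IsClosed U := hUc.isClosed
  -- the set S of trajectories of U with all values in j '' A'
  set S : Set C(ℝ≥0, E₀) :=
    U ∩ ⋂ t : ℝ≥0, (fun u : C(ℝ≥0, E₀) => u t) ⁻¹' (j '' A') with hSdef
  have hSval : ∀ u ∈ S, ∀ t : ℝ≥0, u t ∈ j '' A' := fun u hu t =>
    Set.mem_iInter.mp hu.2 t
  have hScl : IsClosed S :=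
    hUcl.inter (isClosed_iInter fun t =>
      hA'c.isClosed.preimage (continuous_eval_const t))
  have hSsubU : S ⊆ U := Set.inter_subset_left
  have hSc : IsCompact S := hUc.of_isClosed_subset hScl hSsubU
  have hSshift : ∀ r : ℝ≥0, ∀ u ∈ S, shiftOp r u ∈ S := by
    intro r u hu
    refine ⟨?_, Set.mem_iInter.mpr fun t => ?_⟩
    · rw [← hUinv r]; exact Set.mem_image_of_mem _ hu.1
    · exact hSval u hu (t + r)
  -- the decreasing family of shifted copies of S, and its kernel W
  set Wfam : ℝ≥0 → Set C(ℝ≥0, E₀) := fun T => shiftOp T '' S with hWfamdef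
  have hWfam_img : ∀ t T, shiftOp t '' Wfam T = Wfam (T + t) := by
    intro t T
    rw [hWfamdef]
    simp only [Set.image_image]
    exact Set.image_congr fun u _ => shiftOp_comp t T u
  have hWfam_sub : ∀ T r, Wfam (T + r) ⊆ Wfam T := by
    intro T r
    rintro _ ⟨u, hu, rfl⟩
    exact ⟨shiftOp r u, hSshift r u hu, by rw [shiftOp_comp, add_comm]⟩
  have hWfam_mono : ∀ {T T' : ℝ≥0}, T ≤ T' → Wfam T' ⊆ Wfam T := by
    intro T T' h
    have := hWfam_sub T (T' - T)
    rwa [add_tsub_cancel_of_le h] at this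
  set W : Set C(ℝ≥0, E₀) := ⋂ T : ℝ≥0, Wfam T with hWdef
  have hWfam0 : Wfam 0 = S := by
    rw [hWfamdef]
    simp only
    rw [show shiftOp (0 : ℝ≥0) = (id : C(ℝ≥0, E₀) → C(ℝ≥0, E₀)) from funext shiftOp_zero,
      Set.image_id]
  have hWsubS : W ⊆ S := fun x hx => hWfam0 ▸ Set.mem_iInter.mp hx 0
  have hWnat : (⋂ n : ℕ, Wfam n) = W := by
    apply Set.Subset.antisymm
    · intro x hx
      refine Set.mem_iInter.mpr fun T => ?_
      obtain ⟨n, hn⟩ := exists_nat_ge T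
      exact hWfam_mono hn (Set.mem_iInter.mp hx n)
    · exact fun x hx => Set.mem_iInter.mpr fun n => Set.mem_iInter.mp hx n
  have hWfamc : ∀ T, IsCompact (Wfam T) := fun T => hSc.image (continuous_shiftOp_s1 T)
  have hWcl : IsClosed W := isClosed_iInter fun T => (hWfamc T).isClosed
  have hWc : IsCompact W := hSc.of_isClosed_subset hWcl hWsubS
  -- invariance of W
  have hWinv : ∀ t : ℝ≥0, shiftOp t '' W = W := by
    intro t
    apply Set.Subset.antisymm
    · rintro _ ⟨w, hw, rfl⟩
      refine Set.mem_iInter.mpr fun T => ?_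
      have h1 : w ∈ Wfam T := Set.mem_iInter.mp hw T
      have h2 : shiftOp t w ∈ Wfam (T + t) := by
        rw [← hWfam_img t T]; exact Set.mem_image_of_mem _ h1
      exact hWfam_mono le_self_add h2
    · intro v hv
      set P : ℕ → Set C(ℝ≥0, E₀) := fun n => Wfam n ∩ (shiftOp t) ⁻¹' {v} with hPdef
      have hPne : ∀ n, (P n).Nonempty := by
        intro n
        have hv' : v ∈ Wfam ((n : ℝ≥0) + t) := Set.mem_iInter.mp hv _
        rw [← hWfam_img t n] at hv'
        obtain ⟨x, hx, hxe⟩ := hv'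
        exact ⟨x, hx, by simp [hxe]⟩
      have hPcl : ∀ n, IsClosed (P n) := fun n =>
        (hWfamc n).isClosed.inter (isClosed_singleton.preimage (continuous_shiftOp_s1 t))
      have hPsub : ∀ n : ℕ, P (n + 1) ⊆ P n := fun n =>
        Set.inter_subset_inter_left _ (hWfam_mono (by exact_mod_cast Nat.le_succ n))
      obtain ⟨w, hw⟩ :=
        IsCompact.nonempty_iInter_of_sequence_nonempty_isCompact_isClosed P hPsub hPne
          ((hWfamc _).of_isClosed_subset (hPcl 0) Set.inter_subset_left) hPcl
      have hwW : w ∈ W := by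
        rw [← hWnat]
        exact Set.mem_iInter.mpr fun n => (Set.mem_iInter.mp hw n).1
      have hwv : shiftOp t w = v := (Set.mem_iInter.mp hw 0).2
      exact ⟨w, hwW, hwv⟩
  -- S is attracting
  have attrS : ∀ B ⊆ Hplus, BddFamilyE j B → ∀ V ∈ uniformity C(ℝ≥0, E₀),
      ∃ h₀ : ℝ≥0, ∀ h, h₀ ≤ h → ∀ u ∈ B, ∃ s ∈ S, (shiftOp h u, s) ∈ V := by
    intro B hBH hBb V hV
    obtain ⟨W₁, hW₁, hW₁V⟩ := comp_mem_uniformity_sets hV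
    obtain ⟨V₂, ⟨hV₂u, hV₂o⟩, hV₂W₁⟩ := uniformity_hasBasis_open.mem_iff.mp hW₁
    set N : ℝ → Set E₀ := fun r => {y | ∃ a ∈ A', ‖y - j a‖ ≤ r} with hNdef
    have hNmono : ∀ {r r' : ℝ}, r ≤ r' → N r ⊆ N r' := by
      rintro r r' h y ⟨a, ha, hya⟩; exact ⟨a, ha, hya.trans h⟩
    set D : ℕ → Set C(ℝ≥0, E₀) := fun n =>
      U ∩ ⋂ s ∈ Set.Iic ((n : ℝ≥0) + 1),
        (fun v : C(ℝ≥0, E₀) => v s) ⁻¹' closure (N (1 / ((n : ℝ) + 1))) with hDdef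
    have hDcl : ∀ n, IsClosed (D n) := fun n =>
      hUcl.inter (isClosed_biInter fun s _ =>
        isClosed_closure.preimage (continuous_eval_const s))
    have hDsub : ∀ n : ℕ, D (n + 1) ⊆ D n := by
      intro n
      rintro v ⟨hvU, hv⟩
      refine ⟨hvU, Set.mem_iInter₂.mpr fun s hs => ?_⟩
      have hs' : s ∈ Set.Iic (((n + 1 : ℕ) : ℝ≥0) + 1) := by
        refine Set.mem_Iic.mpr (le_trans (Set.mem_Iic.mp hs) ?_)
        push_cast
        exact le_self_add
      have := Set.mem_iInter₂.mp hv s hs'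
      refine closure_mono (hNmono ?_) this
      apply one_div_le_one_div_of_le
      · positivity
      · push_cast; linarith
    have hDinter : (⋂ n, D n) = S := by
      apply Set.Subset.antisymm
      · intro v hv
        have hvn : ∀ n, v ∈ D n := Set.mem_iInter.mp hv
        refine ⟨(hvn 0).1, Set.mem_iInter.mpr fun t => ?_⟩
        have hAcl : IsClosed (j '' A') := hA'c.isClosed
        show v t ∈ ⇑j '' A'
        rw [← hAcl.closure_eq, Metric.mem_closure_iff]
        intro ε hε
        obtain ⟨n₁, hn1⟩ := exists_nat_ge t
        obtain ⟨n₂, hn2⟩ := exists_nat_gt (2 / ε)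
        set nn := max n₁ n₂ with hnn
        have htle : t ∈ Set.Iic ((nn : ℝ≥0) + 1) := by
          refine le_trans hn1 (le_trans ?_ le_self_add)
          exact_mod_cast Nat.le_max_left n₁ n₂
        have hvt : v t ∈ closure (N (1 / ((nn : ℝ) + 1))) :=
          Set.mem_iInter₂.mp (hvn nn).2 t htle
        rw [Metric.mem_closure_iff] at hvt
        obtain ⟨y, hy, hyd⟩ := hvt (1 / ((nn : ℝ) + 1)) (by positivity)
        obtain ⟨a, haA, hya⟩ := hy
        refine ⟨j a, ⟨a, haA, rfl⟩, ?_⟩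
        have h2e : 2 / ε < (nn : ℝ) + 1 := by
          refine lt_of_lt_of_le hn2 ?_
          have : (n₂ : ℝ) ≤ (nn : ℝ) := by exact_mod_cast Nat.le_max_right n₁ n₂
          linarith
        have hfin : 2 / ((nn : ℝ) + 1) < ε := by
          rw [div_lt_iff₀ (by positivity)]
          rw [div_lt_iff₀ hε] at h2e
          linarith [h2e]
        calc dist (v t) (j a) ≤ dist (v t) y + dist y (j a) := dist_triangle _ _ _
          _ < 1 / ((nn : ℝ) + 1) + 1 / ((nn : ℝ) + 1) := by
              refine add_lt_add_of_lt_of_le hyd ?_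
              rw [dist_eq_norm]; exact hya
          _ = 2 / ((nn : ℝ) + 1) := by ring
          _ < ε := hfin
      · intro v hv
        refine Set.mem_iInter.mpr fun n => ⟨hv.1, Set.mem_iInter₂.mpr fun s _ => ?_⟩
        obtain ⟨a, haA, hva⟩ := hSval v hv s
        refine subset_closure ⟨a, haA, ?_⟩
        show ‖v s - j a‖ ≤ 1 / ((n : ℝ) + 1)
        rw [← hva]
        simp
        positivity
    set O : Set C(ℝ≥0, E₀) := ⋃ s ∈ S, {f : C(ℝ≥0, E₀) | (f, s) ∈ V₂} with hOdef
    have hOopen : IsOpen O := isOpen_biUnion fun s _ =>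
      hV₂o.preimage (continuous_id.prodMk continuous_const)
    have hSO : S ⊆ O := fun s hs => Set.mem_biUnion hs (refl_mem_uniformity hV₂u)
    have hDn : ∃ n, D n ⊆ O := by
      by_contra hcon
      push_neg at hcon
      have hne : ∀ n, (D n ∩ Oᶜ).Nonempty := by
        intro n
        obtain ⟨x, hx, hxO⟩ := Set.not_subset.mp (hcon n)
        exact ⟨x, hx, hxO⟩
      have hcl : ∀ n, IsClosed (D n ∩ Oᶜ) := fun n => (hDcl n).inter hOopen.isClosed_compl
      have hsub : ∀ n : ℕ, D (n + 1) ∩ Oᶜ ⊆ D n ∩ Oᶜ := fun n =>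
        Set.inter_subset_inter_left _ (hDsub n)
      have hc0 : IsCompact (D 0 ∩ Oᶜ) :=
        hUc.of_isClosed_subset (hcl 0) (fun x hx => hx.1.1)
      obtain ⟨x, hx⟩ :=
        IsCompact.nonempty_iInter_of_sequence_nonempty_isCompact_isClosed _ hsub hne hc0 hcl
      have hxS : x ∈ S := by
        rw [← hDinter]
        exact Set.mem_iInter.mpr fun n => (Set.mem_iInter.mp hx n).1
      exact (Set.mem_iInter.mp hx 0).2 (hSO hxS)
    obtain ⟨n, hDO⟩ := hDn
    set δ : ℝ := 1 / (2 * ((n : ℝ) + 1)) with hδdef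
    have hδ : 0 < δ := by positivity
    set Eset : Set (C(ℝ≥0, E₀) × C(ℝ≥0, E₀)) :=
      {fg | ∀ x ∈ Set.Iic ((n : ℝ≥0) + 1),
        (fg.1 x, fg.2 x) ∈ {p : E₀ × E₀ | dist p.1 p.2 < δ}} with hEdef
    have hE : Eset ∈ uniformity C(ℝ≥0, E₀) :=
      entourage_mem (isCompact_Iic_nnreal _) (Metric.dist_mem_uniformity hδ)
    obtain ⟨h₁, hh₁⟩ := hUattr B hBH hBb (W₁ ∩ Eset) (inter_mem hW₁ hE)
    obtain ⟨t₁, ht₁⟩ := hattr B hBH hBb δ hδ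
    refine ⟨max h₁ t₁, fun h hh u hu => ?_⟩
    obtain ⟨v, hvU, hv⟩ := hh₁ h (le_trans (le_max_left _ _) hh) u hu
    have hvD : v ∈ D n := by
      refine ⟨hvU, Set.mem_iInter₂.mpr fun s hs => ?_⟩
      have h1 : dist (u (s + h)) (v s) < δ := hv.2 s hs
      obtain ⟨a, haA, ha⟩ :=
        ht₁ (s + h) (le_trans (le_trans (le_max_right _ _) hh) le_add_self) u hu
      refine subset_closure ⟨a, haA, ?_⟩
      have : ‖v s - j a‖ ≤ ‖v s - u (s + h)‖ + ‖u (s + h) - j a‖ :=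
        norm_sub_le_norm_sub_add_norm_sub _ _ _
      have h1' : ‖v s - u (s + h)‖ < δ := by
        rw [← dist_eq_norm, dist_comm]; exact h1
      have hcalc : ‖v s - j a‖ < δ + δ := by
        calc ‖v s - j a‖ ≤ ‖v s - u (s + h)‖ + ‖u (s + h) - j a‖ := this
          _ < δ + δ := add_lt_add h1' ha
      refine le_of_lt (lt_of_lt_of_le hcalc ?_)
      rw [hδdef]
      rw [← add_div]
      rw [div_le_div_iff₀ (by positivity) (by positivity)]
      ring_nf
      nlinarith [Nat.cast_nonneg (α := ℝ) n]
    obtain ⟨sst, hsstS, hsv⟩ := Set.mem_iUnion₂.mp (hDO hvD)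
    exact ⟨sst, hsstS, hW₁V (SetRel.mem_comp.mpr ⟨v, hv.1, hV₂W₁ hsv⟩)⟩
  -- W is attracting
  have attrW : IsAttracting j Hplus W := by
    intro B hBH hBb V hV
    obtain ⟨W₁, hW₁, hW₁V⟩ := comp_mem_uniformity_sets hV
    obtain ⟨V₂, ⟨hV₂u, hV₂o⟩, hV₂W₁⟩ := uniformity_hasBasis_open.mem_iff.mp hW₁
    set O : Set C(ℝ≥0, E₀) := ⋃ w ∈ W, {f : C(ℝ≥0, E₀) | (f, w) ∈ V₂} with hOdef
    have hOopen : IsOpen O := isOpen_biUnion fun s _ =>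
      hV₂o.preimage (continuous_id.prodMk continuous_const)
    have hWO : W ⊆ O := fun w hw => Set.mem_biUnion hw (refl_mem_uniformity hV₂u)
    have hmex : ∃ m : ℕ, Wfam m ⊆ O := by
      by_contra hcon
      push_neg at hcon
      have hne : ∀ n : ℕ, (Wfam n ∩ Oᶜ).Nonempty := by
        intro n
        obtain ⟨x, hx, hxO⟩ := Set.not_subset.mp (hcon n)
        exact ⟨x, hx, hxO⟩
      have hcl : ∀ n : ℕ, IsClosed (Wfam n ∩ Oᶜ) := fun n =>
        (hWfamc n).isClosed.inter hOopen.isClosed_compl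
      have hsub : ∀ n : ℕ, Wfam (n + 1 : ℕ) ∩ Oᶜ ⊆ Wfam n ∩ Oᶜ := fun n =>
        Set.inter_subset_inter_left _ (hWfam_mono (by exact_mod_cast Nat.le_succ n))
      have hc0 : IsCompact (Wfam (0 : ℕ) ∩ Oᶜ) :=
        (hWfamc _).of_isClosed_subset (hcl 0) Set.inter_subset_left
      obtain ⟨x, hx⟩ :=
        IsCompact.nonempty_iInter_of_sequence_nonempty_isCompact_isClosed _ hsub hne hc0 hcl
      have hxW : x ∈ W := by
        rw [← hWnat]
        exact Set.mem_iInter.mpr fun n => (Set.mem_iInter.mp hx n).1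
      exact (Set.mem_iInter.mp hx 0).2 (hWO hxW)
    obtain ⟨m, hm⟩ := hmex
    obtain ⟨⟨K, Vent⟩, ⟨hKc, hVent⟩, hsubW₁⟩ :=
      ContinuousMap.hasBasis_compactConvergenceUniformity.mem_iff.mp hW₁
    set K' : Set ℝ≥0 := (fun x => x + (m : ℝ≥0)) '' K with hK'def
    have hK'c : IsCompact K' := hKc.image (continuous_add_right _)
    obtain ⟨h₂, hh₂⟩ := attrS B hBH hBb
      {fg | ∀ x ∈ K', (fg.1 x, fg.2 x) ∈ Vent} (entourage_mem hK'c hVent)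
    refine ⟨h₂ + m, fun h hh u hu => ?_⟩
    have hm_le : (m : ℝ≥0) ≤ h := le_trans le_add_self hh
    obtain ⟨s, hsS, hs⟩ := hh₂ (h - m) (le_tsub_of_add_le_right hh) u hu
    have key : (shiftOp h u, shiftOp m s) ∈ W₁ := by
      apply hsubW₁
      intro x hx
      have hx' : x + (m : ℝ≥0) ∈ K' := ⟨x, hx, rfl⟩
      have hpt := hs (x + m) hx'
      simp only [shiftOp_apply] at hpt ⊢
      have heq : x + h = x + m + (h - m) := by
        rw [add_assoc, add_tsub_cancel_of_le hm_le]
      rw [heq]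
      exact hpt
    have hWm : shiftOp m s ∈ Wfam m := Set.mem_image_of_mem _ hsS
    obtain ⟨w, hwW, hw2⟩ := Set.mem_iUnion₂.mp (hm hWm)
    exact ⟨w, hwW, hW₁V (SetRel.mem_comp.mpr ⟨shiftOp m s, key, hV₂W₁ hw2⟩)⟩
  -- W is bounded
  have hWb : BddFamilyE j W := by
    obtain ⟨R, hR⟩ := hUb
    exact ⟨R, fun u hu => hR u (hSsubU (hWsubS hu))⟩
  -- minimality of U gives U ⊆ W ⊆ S
  have hUW : U ⊆ W := hUmin W ⟨hWc, hWb⟩ hWinv attrW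
  intro ξ hξ t
  exact hSval ξ (hWsubS (hUW hξ)) t

/-- If the trajectory space `Hplus ⊆ C([0,∞);E₀) ∩ L∞(0,∞;E)` (with `E` a reflexive Banach
space continuously embedded in the Banach space `E₀` via `j`) possesses a minimal trajectory
attractor `U`, then it possesses a global attractor `A` (in `E₀`), and
`A = {ξ(t) : ξ ∈ U}` for every `t ≥ 0`. -/
theorem exists_global_attractor_of_minimal_trajectory_attractor
    [CompleteSpace E] [CompleteSpace E₀]
    (j : E →L[ℝ] E₀) (hj : Function.Injective j)
    (hrefl : Function.Surjective (NormedSpace.inclusionInDoubleDual ℝ E))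
    (Hplus : Set C(ℝ≥0, E₀)) (hH : ∀ u ∈ Hplus, MemLinftyE j u)
    (U : Set C(ℝ≥0, E₀)) (hU : IsMinTrajAttractor j Hplus U) :
    ∃ A : Set E, IsGlobalAttractor j Hplus A ∧
      ∀ t : ℝ≥0, j '' A = (fun ξ : C(ℝ≥0, E₀) => ξ t) '' U := by

  obtain ⟨R, hR⟩ := hU.1.2
  set A : Set E := {x : E | ∃ ξ ∈ U, j x = ξ 0} with hAdef
  have hjA : j '' A = (fun ξ : C(ℝ≥0, E₀) => ξ 0) '' U := by
    apply Set.Subset.antisymm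
    · rintro _ ⟨x, ⟨ξ, hξ, hx⟩, rfl⟩
      exact ⟨ξ, hξ, hx.symm⟩
    · rintro _ ⟨ξ, hξ, rfl⟩
      obtain ⟨x, hx1, _⟩ := hR ξ hξ 0
      exact ⟨x, ⟨ξ, hξ, hx1⟩, hx1⟩
  have hAt : ∀ t : ℝ≥0, j '' A = (fun ξ : C(ℝ≥0, E₀) => ξ t) '' U := by
    intro t
    rw [hjA]
    calc (fun ξ : C(ℝ≥0, E₀) => ξ 0) '' U
        = (fun ξ : C(ℝ≥0, E₀) => ξ 0) '' (shiftOp t '' U) := by rw [hU.2.1 t]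
      _ = (fun ξ : C(ℝ≥0, E₀) => ξ t) '' U := by
          rw [Set.image_image]
          refine Set.image_congr fun ξ _ => ?_
          show ξ (0 + t) = ξ t
          rw [zero_add]
  refine ⟨A, ⟨⟨?_, ?_⟩, ?_, ?_⟩, hAt⟩
  · -- compactness of j '' A
    rw [hjA]
    exact hU.1.1.image (continuous_eval_const 0)
  · -- boundedness of A
    refine isBounded_iff_forall_norm_le.mpr ⟨R, ?_⟩
    rintro x ⟨ξ, hξ, hx⟩
    obtain ⟨y, hy1, hy2⟩ := hR ξ hξ 0
    have : x = y := hj (hx.trans hy1.symm)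
    rw [this]; exact hy2
  · -- attraction
    intro B hBH hBb ε hε
    have hV := entourage_mem ((isCompact_singleton : IsCompact ({0} : Set ℝ≥0)))
      (Metric.dist_mem_uniformity (α := E₀) hε)
    obtain ⟨h₀, hh⟩ := hU.2.2.1 B hBH hBb _ hV
    refine ⟨h₀, fun t ht u hu => ?_⟩
    obtain ⟨v, hvU, hv⟩ := hh t ht u hu
    obtain ⟨x, hx1, _⟩ := hR v hvU 0
    refine ⟨x, ⟨v, hvU, hx1⟩, ?_⟩
    have h0 := hv 0 rfl
    have : dist (u t) (v 0) < ε := by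
      have he : shiftOp t u 0 = u t := by
        show u (0 + t) = u t
        rw [zero_add]
      rwa [he] at h0
    rw [← hx1] at this
    rwa [dist_eq_norm] at this
  · -- minimality
    rintro A' ⟨hA'c, _⟩ hattr
    rintro x ⟨ξ, hξ, hx⟩
    have hval := values_mem_of_attracting j Hplus U hU A' hA'c hattr ξ hξ 0
    rw [← hx] at hval
    obtain ⟨a, haA, hax⟩ := hval
    have : a = x := hj hax
    rwa [← this]
end
end
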